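/- Let (Ω, d₁) and (Ω, d₂) be two metrics on a set Ω making it a compact metric space, inducing the same topology. If a sequence {ωₙ}ₙ≥0 ⊆ Ω satisfies the repetition property with respect to d₁, then it satisfies the repetition property with respect to d₂. -/
import Mathlib


/-- A sequence `w` in `Ω` satisfies the repetition property with respect to a
distance function `d` if for all `ε > 0` and all `r ∈ ℤ₊` there exists `q ∈ ℤ₊`
such that `d (w n) (w (n+q)) < ε` for all `n ∈ {0, 1, …, r*q}`. -/
def SatisfiesRP {Ω : Type*} (d : Ω → Ω → ℝ) (w : ℕ → Ω) : Prop :=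
  ∀ ε > (0 : ℝ), ∀ r : ℕ, 0 < r → ∃ q : ℕ, 0 < q ∧ ∀ n ≤ r * q, d (w n) (w (n + q)) < ε

theorem rp_indep_of_metric {Ω : Type*} (m₁ m₂ : MetricSpace Ω)
    (htop : m₁.toUniformSpace.toTopologicalSpace = m₂.toUniformSpace.toTopologicalSpace)
    (hcompact : @CompactSpace Ω m₁.toUniformSpace.toTopologicalSpace)
    (w : ℕ → Ω)
    (h : SatisfiesRP (@dist Ω m₁.toDist) w) :
    SatisfiesRP (@dist Ω m₂.toDist) w := by
  have hcont : @Continuous Ω Ω m₁.toUniformSpace.toTopologicalSpace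
      m₂.toUniformSpace.toTopologicalSpace id := by
    rw [htop]; exact continuous_id
  have huc : @UniformContinuous Ω Ω m₁.toUniformSpace m₂.toUniformSpace id :=
    @CompactSpace.uniformContinuous_of_continuous Ω Ω m₁.toUniformSpace
      m₂.toUniformSpace hcompact id hcont
  intro ε hε r hr
  obtain ⟨δ, hδ, hmod⟩ :=
    (@Metric.uniformContinuous_iff Ω Ω m₁.toPseudoMetricSpace m₂.toPseudoMetricSpace id).mp
      huc ε hε
  obtain ⟨q, hq, hqd⟩ := h δ hδ r hr
  exact ⟨q, hq, fun n hn => hmod (hqd n hn)⟩
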